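/- A helix in ℝ³, given by t ↦ (cos t, sin t, c·t) with c ≠ 0, is chiral: its image under reflection in the xy-plane cannot be mapped back onto the original helix by any orientation-preserving isometry of ℝ³ that fixes the helix's axis setwise. Precisely, there is no rotation about the z-axis composed with a translation along the z-axis carrying the set {(cos t, sin t, -c·t) : t ∈ ℝ} onto {(cos t, sin t, c·t) : t ∈ ℝ}. -/
import Mathlib


open Real

lemma helix_key {x y : ℝ} (hcos : Real.cos x = Real.cos y) (hsin : Real.sin x = Real.sin y) :
    ∃ k : ℤ, x - y = 2 * π * k :=
  Real.Angle.angle_eq_iff_two_pi_dvd_sub.1 (Real.Angle.cos_sin_inj hcos hsin)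

/-- The right-handed helix `H_c` cannot be obtained from its mirror image `H_{-c}`
by any rotation about the z-axis composed with a translation along the z-axis. -/
theorem helix_chiral (c : ℝ) (hc : c ≠ 0) :
    ¬ ∃ θ a : ℝ,
      (fun p : ℝ × ℝ × ℝ =>
          (p.1 * Real.cos θ - p.2.1 * Real.sin θ,
           p.1 * Real.sin θ + p.2.1 * Real.cos θ,
           p.2.2 + a)) ''
        {p : ℝ × ℝ × ℝ | ∃ t : ℝ, p = (Real.cos t, Real.sin t, -c * t)} =
      {p : ℝ × ℝ × ℝ | ∃ t : ℝ, p = (Real.cos t, Real.sin t, c * t)} := by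
  rintro ⟨θ, a, h⟩
  -- the image of the point at t = 0
  have h0 : (Real.cos θ, Real.sin θ, a) ∈
      {p : ℝ × ℝ × ℝ | ∃ t : ℝ, p = (Real.cos t, Real.sin t, c * t)} := by
    rw [← h]
    refine ⟨(1, 0, 0), ⟨0, by norm_num⟩, ?_⟩
    simp
  -- the image of the point at t = π/2
  have h1 : (Real.cos (π/2 + θ), Real.sin (π/2 + θ), -c * (π/2) + a) ∈
      {p : ℝ × ℝ × ℝ | ∃ t : ℝ, p = (Real.cos t, Real.sin t, c * t)} := by
    rw [← h]
    refine ⟨(0, 1, -c * (π/2)), ⟨π/2, by norm_num⟩, ?_⟩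
    simp [Real.cos_add, Real.sin_add]
  obtain ⟨s0, hs0⟩ := h0
  obtain ⟨s1, hs1⟩ := h1
  rw [Prod.ext_iff, Prod.ext_iff] at hs0 hs1
  obtain ⟨hc0, hsin0, hz0⟩ := hs0
  obtain ⟨hc1, hsin1, hz1⟩ := hs1
  obtain ⟨k0, hk0⟩ := helix_key hc0 hsin0
  obtain ⟨k1, hk1⟩ := helix_key hc1 hsin1
  -- a = c * s0 with θ - s0 = 2πk0 ; -cπ/2 + a = c * s1 with π/2 + θ - s1 = 2πk1
  have key : 2 * π * c * ((k0:ℝ) - k1) = -(π * c) := by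
    have e0 : s0 = θ - 2 * π * k0 := by linarith
    have e1 : s1 = π/2 + θ - 2 * π * k1 := by linarith
    have ha : a = c * (θ - 2 * π * k0) := by rw [← e0]; exact hz0
    have h2 : -c * (π/2) + a = c * (π/2 + θ - 2 * π * k1) := by rw [← e1]; exact hz1
    nlinarith [ha, h2]
  have hpc : π * c ≠ 0 := mul_ne_zero Real.pi_ne_zero hc
  have hr : (2 : ℝ) * ((k0:ℝ) - k1) = -1 :=
    mul_left_cancel₀ hpc (by linear_combination key)
  have hint : (2 : ℤ) * (k0 - k1) = -1 := by exact_mod_cast hr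
  omega
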